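/- lim_{n→∞} S_{A₀^{(n)}} = 1 (Theorem 1, part 1, first limit). Here 0 < p < 1 since abcd ≠ 0. -/

import Mathlib

open Matrix Filter
open scoped BigOperators Classical

noncomputable section

/-- Index in `Fin 2` of a direction: `false` ↔ `-1` (index `0`), `true` ↔ `1` (index `1`). -/
def bidx (b : Bool) : Fin 2 := if b then 1 else 0

/-- The standard basis vector `e_j`, `j ∈ {-1,1}`, of `ℂ²`. -/
def eVec (b : Bool) : Fin 2 → ℂ := fun i => if i = bidx b then 1 else 0

/-- The projection `e_j e_j†`. -/
def projC (b : Bool) : Matrix (Fin 2) (Fin 2) ℂ :=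
  Matrix.single (bidx b) (bidx b) 1

/-- `P_j = e_j e_j† U`. -/
def pMat (U : Matrix (Fin 2) (Fin 2) ℂ) (b : Bool) : Matrix (Fin 2) (Fin 2) ℂ :=
  projC b * U

/-- The weight of a path `ξ = (ξ_n, …, ξ_1)` (here `ξ i` is step `i+1`):
`w(ξ) = P_{ξ_n} ⋯ P_{ξ_1} φ₀`. -/
def weight (U : Matrix (Fin 2) (Fin 2) ℂ) (φ₀ : Fin 2 → ℂ) {n : ℕ} (ξ : Fin n → Bool) :
    Fin 2 → ℂ :=
  ((List.ofFn fun i => pMat U (ξ i)).reverse.prod).mulVec φ₀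

/-- The complex inner product `⟨v, w⟩`, conjugate-linear in the first slot. -/
def cdot (v w : Fin 2 → ℂ) : ℂ := ∑ i, (starRingEnd ℂ) (v i) * w i

/-- The decoherence matrix restricted to a set `A` of pairs of paths. -/
def decMat (U : Matrix (Fin 2) (Fin 2) ℂ) (φ₀ : Fin 2 → ℂ) {n : ℕ}
    (A : Set ((Fin n → Bool) × (Fin n → Bool))) :
    Matrix (Fin n → Bool) (Fin n → Bool) ℂ :=
  Matrix.of fun ξ η =>
    if (ξ, η) ∈ A then cdot (weight U φ₀ ξ) (weight U φ₀ η) else 0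

/-- `ξ_1 + ⋯ + ξ_n ∈ ℤ`, each step being `±1`. -/
def pathSum {n : ℕ} (ξ : Fin n → Bool) : ℤ := ∑ i, (if ξ i then 1 else -1)

/-- `A₀^{(n)}`: pairs of paths with the same final direction (paths have length `n+1`). -/
def A0 (n : ℕ) : Set ((Fin (n+1) → Bool) × (Fin (n+1) → Bool)) :=
  {x | x.1 (Fin.last n) = x.2 (Fin.last n)}

/-- `A_P^{(n)}`: pairs of paths with the same final direction and the same endpoint. -/
def AP (n : ℕ) : Set ((Fin (n+1) → Bool) × (Fin (n+1) → Bool)) :=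
  {x | x.1 (Fin.last n) = x.2 (Fin.last n) ∧ pathSum x.1 = pathSum x.2}

/-- `A₁^{(n)}`: the diagonal pairs. -/
def A1 (n : ℕ) : Set ((Fin (n+1) → Bool) × (Fin (n+1) → Bool)) :=
  {x | x.1 = x.2}

/-- The von Neumann entropy `S(D) = −Σᵢ λᵢ log₂ λᵢ`, summing over the eigenvalues with
multiplicity (the roots of the characteristic polynomial; they are real for a PSD Hermitian
matrix), with the convention `0 · log₂ 0 = 0`. -/
def vnEntropy {I : Type*} [Fintype I] [DecidableEq I] (D : Matrix I I ℂ) : ℝ :=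
  -((D.charpoly.roots).map fun lam => lam.re * Real.logb 2 lam.re).sum

/-- The real projection `e_j e_j†`. -/
def projR (b : Bool) : Matrix (Fin 2) (Fin 2) ℝ :=
  Matrix.single (bidx b) (bidx b) 1

/-- The stochastic matrix `M = [[p, q], [q, p]]` of the correlated random walk, `q = 1 − p`. -/
def rwM (p : ℝ) : Matrix (Fin 2) (Fin 2) ℝ := !![p, 1-p; 1-p, p]

/-- The initial vector `φ = (q₀, p₀)ᵀ` of the correlated random walk, `q₀ = 1 − p₀`. -/
def rwφ (p₀ : ℝ) : Fin 2 → ℝ := ![1 - p₀, p₀]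

/-- `P̃_{ξ_n} ⋯ P̃_{ξ_2} φ_{ξ_1}`, where `P̃_j = e_j e_j† M` and `φ_j = e_j e_j† φ`. -/
def rwVec (p p₀ : ℝ) : {n : ℕ} → (Fin n → Bool) → (Fin 2 → ℝ)
  | 0, _ => rwφ p₀
  | n + 1, ξ =>
      ((List.ofFn fun i : Fin n => projR (ξ i.succ) * rwM p).reverse.prod).mulVec
        ((projR (ξ 0)).mulVec (rwφ p₀))

/-- `p_L^{(n)}(j)`: the probability that the `(p₀,p)`-correlated random walk is at `j`
at time `n`, having arrived from the left. -/
def pL (p p₀ : ℝ) (n : ℕ) (j : ℤ) : ℝ :=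
  ∑ ξ ∈ Finset.univ.filter (fun ξ : Fin n → Bool => pathSum ξ = j), rwVec p p₀ ξ 0

/-- `p_R^{(n)}(j)`: the probability that the `(p₀,p)`-correlated random walk is at `j`
at time `n`, having arrived from the right. -/
def pR (p p₀ : ℝ) (n : ℕ) (j : ℤ) : ℝ :=
  ∑ ξ ∈ Finset.univ.filter (fun ξ : Fin n → Bool => pathSum ξ = j), rwVec p p₀ ξ 1

-- AUX
lemma bidx_inj : ∀ {x y : Bool}, bidx x = bidx y → x = y := by decide

variable (U : Matrix (Fin 2) (Fin 2) ℂ) (φ₀ : Fin 2 → ℂ)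

lemma weight_succ {n : ℕ} (ξ : Fin (n+1) → Bool) :
    weight U φ₀ ξ = (pMat U (ξ (Fin.last n))).mulVec (weight U φ₀ (ξ ∘ Fin.castSucc)) := by
  unfold weight
  rw [List.ofFn_succ', List.concat_eq_append, List.reverse_append]
  simp only [List.reverse_singleton, List.singleton_append, List.prod_cons]
  exact (Matrix.mulVec_mulVec _ _ _).symm

lemma pMat_mulVec (b : Bool) (v : Fin 2 → ℂ) (i : Fin 2) :
    (pMat U b).mulVec v i = if i = bidx b then U.mulVec v (bidx b) else 0 := by
  rw [pMat, ← Matrix.mulVec_mulVec]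
  simp only [projC, Matrix.mulVec, dotProduct, Matrix.single]
  rcases b with _ | _ <;> fin_cases i <;> simp [bidx, Fin.sum_univ_two, Matrix.mulVec, dotProduct]

lemma weight_support {n : ℕ} (ξ : Fin (n+1) → Bool) (i : Fin 2)
    (hi : i ≠ bidx (ξ (Fin.last n))) : weight U φ₀ ξ i = 0 := by
  rw [weight_succ, pMat_mulVec, if_neg hi]

lemma cdot_eq_zero {n : ℕ} (ξ η : Fin (n+1) → Bool)
    (h : ξ (Fin.last n) ≠ η (Fin.last n)) :
    cdot (weight U φ₀ ξ) (weight U φ₀ η) = 0 := by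
  unfold cdot
  apply Finset.sum_eq_zero
  intro i _
  by_cases hi : i = bidx (ξ (Fin.last n))
  · have : i ≠ bidx (η (Fin.last n)) := by
      rw [hi]
      exact fun hc => h (bidx_inj hc)
    rw [weight_support U φ₀ η i this, mul_zero]
  · rw [weight_support U φ₀ ξ i hi, map_zero, zero_mul]

def tN (n : ℕ) (i : Fin 2) : ℝ :=
  ∑ ξ : Fin (n+1) → Bool, Complex.normSq (weight U φ₀ ξ i)

def Cmat (n : ℕ) : Matrix (Fin 2) (Fin (n+1) → Bool) ℂ :=
  Matrix.of fun i ξ => weight U φ₀ ξ i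

lemma decMat_eq (n : ℕ) :
    decMat U φ₀ (A0 n) = (Cmat U φ₀ n)ᴴ * (Cmat U φ₀ n) := by
  ext ξ η
  simp only [decMat, Matrix.of_apply, Matrix.mul_apply, Matrix.conjTranspose_apply, Cmat]
  by_cases h : (ξ, η) ∈ A0 n
  · rw [if_pos h]; rfl
  · rw [if_neg h]
    have := cdot_eq_zero U φ₀ ξ η h
    rw [← this]; rfl

lemma CCH_eq (n : ℕ) :
    (Cmat U φ₀ n) * (Cmat U φ₀ n)ᴴ
      = Matrix.diagonal (fun i => ((tN U φ₀ n i : ℝ) : ℂ)) := by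
  ext i j
  simp only [Matrix.mul_apply, Matrix.conjTranspose_apply, Cmat, Matrix.of_apply,
    Matrix.diagonal_apply]
  by_cases h : i = j
  · subst h
    rw [if_pos rfl, tN]
    push_cast
    apply Finset.sum_congr rfl
    intro ξ _
    rw [← Complex.mul_conj]; rfl
  · rw [if_neg h]
    apply Finset.sum_eq_zero
    intro ξ _
    by_cases hi : i = bidx (ξ (Fin.last n))
    · have hj : j ≠ bidx (ξ (Fin.last n)) := fun hj => h (hi.trans hj.symm)
      rw [weight_support U φ₀ ξ j hj, star_zero, mul_zero]
    · rw [weight_support U φ₀ ξ i hi, zero_mul]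

lemma eval_charpoly {I : Type*} [Fintype I] [DecidableEq I] (M : Matrix I I ℂ) (x : ℂ) :
    Polynomial.eval x M.charpoly
      = Matrix.det (Matrix.diagonal (fun _ : I => x) - M) := by
  rw [Matrix.charpoly, ← Polynomial.coe_evalRingHom, RingHom.map_det]
  congr 1
  ext i j
  by_cases h : i = j
  · subst h
    simp [Matrix.charmatrix_apply_eq]
  · simp [Matrix.charmatrix_apply_ne _ _ _ h, Matrix.diagonal_apply_ne _ h]

lemma charpoly_decMat (n : ℕ) :
    (decMat U φ₀ (A0 n)).charpoly
      = Polynomial.X ^ (Fintype.card (Fin (n+1) → Bool) - 2)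
        * (Polynomial.X - Polynomial.C ((tN U φ₀ n 0 : ℝ) : ℂ))
        * (Polynomial.X - Polynomial.C ((tN U φ₀ n 1 : ℝ) : ℂ)) := by
  set N := Fintype.card (Fin (n+1) → Bool) with hNdef
  have hN : 2 ≤ N := by
    rw [hNdef, Fintype.card_fun, Fintype.card_bool, Fintype.card_fin]
    calc 2 = 2^1 := rfl
    _ ≤ 2^(n+1) := Nat.pow_le_pow_right (by norm_num) (by omega)
  apply Polynomial.eq_of_infinite_eval_eq
  apply Set.Infinite.mono (s := {x : ℂ | x ≠ 0})
  · intro x hx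
    have hx : (x : ℂ) ≠ 0 := hx
    set d : Fin 2 → ℂ := fun i => ((tN U φ₀ n i : ℝ) : ℂ) with hd
    have key : Polynomial.eval x (decMat U φ₀ (A0 n)).charpoly
        = x ^ N * ((1 - x⁻¹ * d 0) * (1 - x⁻¹ * d 1)) := by
      rw [_root_.eval_charpoly, decMat_eq]
      have h1 : Matrix.diagonal (fun _ : (Fin (n+1) → Bool) => x)
            - (Cmat U φ₀ n)ᴴ * (Cmat U φ₀ n)
          = x • (1 - (Cmat U φ₀ n)ᴴ * (x⁻¹ • Cmat U φ₀ n)) := by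
        rw [smul_sub, Matrix.mul_smul, smul_smul, mul_inv_cancel₀ hx, one_smul]
        congr 1
        ext i j
        by_cases h : i = j <;> simp [h, Matrix.diagonal_apply, Matrix.one_apply]
      rw [h1, Matrix.det_smul, Matrix.det_one_sub_mul_comm]
      have h2 : (x⁻¹ • Cmat U φ₀ n) * (Cmat U φ₀ n)ᴴ
          = Matrix.diagonal (fun i => x⁻¹ * d i) := by
        rw [Matrix.smul_mul, CCH_eq]
        ext i j
        by_cases h : i = j <;> simp [h, Matrix.diagonal_apply, hd]
      rw [h2]
      have h3 : (1 : Matrix (Fin 2) (Fin 2) ℂ) - Matrix.diagonal (fun i => x⁻¹ * d i)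
          = Matrix.diagonal (fun i => 1 - x⁻¹ * d i) := by
        ext i j
        by_cases h : i = j <;> simp [h, Matrix.diagonal_apply, Matrix.one_apply]
      rw [h3, Matrix.det_diagonal, Fin.prod_univ_two]
    rw [Set.mem_setOf_eq, key]
    simp only [Polynomial.eval_mul, Polynomial.eval_pow, Polynomial.eval_sub,
      Polynomial.eval_X, Polynomial.eval_C]
    have hxN : x ^ N = x ^ (N - 2) * x * x := by
      rw [mul_assoc, ← pow_two, ← pow_add]
      congr 1
      omega
    rw [hxN]
    have e0 : x * (1 - x⁻¹ * d 0) = x - d 0 := by field_simp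
    have e1 : x * (1 - x⁻¹ * d 1) = x - d 1 := by field_simp
    calc x ^ (N-2) * x * x * ((1 - x⁻¹ * d 0) * (1 - x⁻¹ * d 1))
        = x ^ (N-2) * (x * (1 - x⁻¹ * d 0)) * (x * (1 - x⁻¹ * d 1)) := by ring
      _ = _ := by rw [e0, e1, hd]
  · have : ({x : ℂ | x ≠ 0}) = ({0} : Set ℂ)ᶜ := by ext; simp
    rw [this]
    exact (Set.finite_singleton 0).infinite_compl

lemma vnEntropy_decMat (n : ℕ) :
    vnEntropy (decMat U φ₀ (A0 n))
      = -(tN U φ₀ n 0 * Real.logb 2 (tN U φ₀ n 0)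
          + tN U φ₀ n 1 * Real.logb 2 (tN U φ₀ n 1)) := by
  rw [vnEntropy, charpoly_decMat]
  have h1 : (Polynomial.X ^ (Fintype.card (Fin (n+1) → Bool) - 2)
      * (Polynomial.X - Polynomial.C ((tN U φ₀ n 0 : ℝ) : ℂ)) : Polynomial ℂ) ≠ 0 :=
    ((Polynomial.monic_X_pow _).mul (Polynomial.monic_X_sub_C _)).ne_zero
  have h2 : ((Polynomial.X - Polynomial.C ((tN U φ₀ n 1 : ℝ) : ℂ)) : Polynomial ℂ) ≠ 0 :=
    (Polynomial.monic_X_sub_C _).ne_zero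
  have h3 : (Polynomial.X ^ (Fintype.card (Fin (n+1) → Bool) - 2) : Polynomial ℂ) ≠ 0 :=
    (Polynomial.monic_X_pow _).ne_zero
  have h4 : ((Polynomial.X - Polynomial.C ((tN U φ₀ n 0 : ℝ) : ℂ)) : Polynomial ℂ) ≠ 0 :=
    (Polynomial.monic_X_sub_C _).ne_zero
  rw [Polynomial.roots_mul (mul_ne_zero h1 h2), Polynomial.roots_mul (mul_ne_zero h3 h4),
    Polynomial.roots_pow, Polynomial.roots_X, Polynomial.roots_X_sub_C,
    Polynomial.roots_X_sub_C, Multiset.nsmul_singleton]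
  simp only [Multiset.map_add, Multiset.sum_add, Multiset.map_replicate,
    Multiset.sum_replicate, Multiset.map_singleton, Multiset.sum_singleton,
    Complex.zero_re, zero_mul, smul_zero, zero_add, Complex.ofReal_re]

lemma mulVec_weight {n : ℕ} (η : Fin (n+1) → Bool) (i : Fin 2) :
    U.mulVec (weight U φ₀ η) i
      = U i (bidx (η (Fin.last n))) * weight U φ₀ η (bidx (η (Fin.last n))) := by
  rw [Matrix.mulVec, dotProduct]
  exact Finset.sum_eq_single _
    (fun j _ hj => by rw [weight_support U φ₀ η j hj, mul_zero])
    (fun h => absurd (Finset.mem_univ _) h)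

lemma sum_bool_bidx (i : Fin 2) (A : ℝ) :
    (∑ b : Bool, if i = bidx b then A else 0) = A := by
  rw [Fintype.sum_bool]
  fin_cases i <;> simp [bidx]

lemma tN_succ (n : ℕ) (i : Fin 2) :
    tN U φ₀ (n+1) i = ∑ j, Complex.normSq (U i j) * tN U φ₀ n j := by
  have step : ∀ (η : Fin (n+1) → Bool),
      (∑ b : Bool, Complex.normSq (weight U φ₀ (Fin.snoc η b) i))
        = ∑ j, Complex.normSq (U i j) * Complex.normSq (weight U φ₀ η j) := by
    intro η
    have hW : ∀ b : Bool, weight U φ₀ (Fin.snoc η b : Fin (n+2) → Bool)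
        = (pMat U b).mulVec (weight U φ₀ η) := by
      intro b
      rw [weight_succ]
      have h1 : (Fin.snoc η b : Fin (n+2) → Bool) (Fin.last (n+1)) = b := Fin.snoc_last _ _
      have h2 : (Fin.snoc η b : Fin (n+2) → Bool) ∘ Fin.castSucc = η :=
        funext fun j => Fin.snoc_castSucc _ _ _
      rw [h1, h2]
    set k := bidx (η (Fin.last n)) with hk
    have hterm : ∀ b : Bool, Complex.normSq ((pMat U b).mulVec (weight U φ₀ η) i)
        = if i = bidx b then Complex.normSq (U i k)
            * Complex.normSq (weight U φ₀ η k) else 0 := by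
      intro b
      rw [pMat_mulVec]
      by_cases h : i = bidx b
      · rw [if_pos h, if_pos h, ← h, mulVec_weight, Complex.normSq_mul, ← hk]
      · rw [if_neg h, if_neg h, Complex.normSq_zero]
    have hsum : (∑ b : Bool, Complex.normSq (weight U φ₀ (Fin.snoc η b) i))
        = Complex.normSq (U i k) * Complex.normSq (weight U φ₀ η k) := by
      simp only [hW, hterm]
      exact sum_bool_bidx i _
    rw [hsum]
    symm
    exact Finset.sum_eq_single _
      (fun j _ hj => by rw [weight_support U φ₀ η j hj, Complex.normSq_zero, mul_zero])
      (fun h => absurd (Finset.mem_univ _) h)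
  have he : tN U φ₀ (n+1) i
      = ∑ y : Bool × (Fin (n+1) → Bool),
          Complex.normSq (weight U φ₀ (Fin.snoc y.2 y.1) i) := by
    rw [tN]
    exact (Fintype.sum_equiv (Fin.snocEquiv (fun _ => Bool)) _ _ (fun y => rfl)).symm
  rw [he, Fintype.sum_prod_type, Finset.sum_comm]
  calc ∑ η : Fin (n+1) → Bool, ∑ b : Bool,
        Complex.normSq (weight U φ₀ (Fin.snoc η b) i)
      = ∑ η : Fin (n+1) → Bool, ∑ j,
          Complex.normSq (U i j) * Complex.normSq (weight U φ₀ η j) := by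
        exact Finset.sum_congr rfl fun η _ => step η
    _ = ∑ j, Complex.normSq (U i j) * tN U φ₀ n j := by
        rw [Finset.sum_comm]
        exact Finset.sum_congr rfl fun j _ => by rw [tN, ← Finset.mul_sum]

lemma tN_zero (i : Fin 2) : tN U φ₀ 0 i = Complex.normSq (U.mulVec φ₀ i) := by
  have hw : ∀ ξ : Fin 1 → Bool, weight U φ₀ ξ i
      = if i = bidx (ξ 0) then U.mulVec φ₀ (bidx (ξ 0)) else 0 := by
    intro ξ
    have h0 : weight U φ₀ (ξ ∘ Fin.castSucc : Fin 0 → Bool) = φ₀ := by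
      unfold weight
      simp
    rw [weight_succ, h0, pMat_mulVec]
    rfl
  rw [tN]
  rw [← (Equiv.funUnique (Fin 1) Bool).symm.sum_comp
    (fun ξ => Complex.normSq (weight U φ₀ ξ i))]
  have : ∀ b : Bool, Complex.normSq
        (weight U φ₀ ((Equiv.funUnique (Fin 1) Bool).symm b) i)
      = if i = bidx b then Complex.normSq (U.mulVec φ₀ i) else 0 := by
    intro b
    rw [hw]
    by_cases h : i = bidx b
    · have hb : ((Equiv.funUnique (Fin 1) Bool).symm b) 0 = b := rfl
      rw [hb, if_pos h, ← h, if_pos rfl]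
    · have hb : ((Equiv.funUnique (Fin 1) Bool).symm b) 0 = b := rfl
      rw [hb, if_neg h, Complex.normSq_zero, if_neg h]
  simp only [this]
  exact sum_bool_bidx i _


/-- `lim_{n→∞} S_{A₀^{(n)}} = 1` (Theorem 1, part 1, first limit). -/
theorem tendsto_vnEntropy_decMat_A0
    (a b c d α β : ℂ)
    (hU : !![a, b; c, d] ∈ Matrix.unitaryGroup (Fin 2) ℂ)
    (habcd : a * b * c * d ≠ 0)
    (hφ : ‖α‖ ^ 2 + ‖β‖ ^ 2 = 1) :
    Filter.Tendsto (fun n : ℕ => vnEntropy (decMat !![a, b; c, d] ![α, β] (A0 n)))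
      Filter.atTop (nhds 1) := by
  set U : Matrix (Fin 2) (Fin 2) ℂ := !![a, b; c, d] with hUdef
  set φ : Fin 2 → ℂ := ![α, β] with hφdef
  have ha : a ≠ 0 := fun h => habcd (by rw [h]; ring)
  have hb : b ≠ 0 := fun h => habcd (by rw [h]; ring)
  set p : ℝ := Complex.normSq a with hp
  -- unitarity consequences
  have hUU : U * star U = 1 := Matrix.mem_unitaryGroup_iff.mp hU
  have hUU' : star U * U = 1 := Matrix.mem_unitaryGroup_iff'.mp hU
  have entry : ∀ (i j : Fin 2) (M N : Matrix (Fin 2) (Fin 2) ℂ), M = N → M i j = N i j :=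
    fun i j M N h => by rw [h]
  have hab : a * (starRingEnd ℂ) a + b * (starRingEnd ℂ) b = 1 := by
    have := entry 0 0 _ _ hUU
    simpa [Matrix.mul_apply, Fin.sum_univ_two, hUdef, Matrix.one_apply] using this
  have hcd : c * (starRingEnd ℂ) c + d * (starRingEnd ℂ) d = 1 := by
    have := entry 1 1 _ _ hUU
    simpa [Matrix.mul_apply, Fin.sum_univ_two, hUdef, Matrix.one_apply] using this
  have hac : (starRingEnd ℂ) a * a + (starRingEnd ℂ) c * c = 1 := by
    have := entry 0 0 _ _ hUU'
    simpa [Matrix.mul_apply, Fin.sum_univ_two, hUdef, Matrix.one_apply] using this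
  have hbd : (starRingEnd ℂ) b * b + (starRingEnd ℂ) d * d = 1 := by
    have := entry 1 1 _ _ hUU'
    simpa [Matrix.mul_apply, Fin.sum_univ_two, hUdef, Matrix.one_apply] using this
  have habcd0 : (starRingEnd ℂ) a * b + (starRingEnd ℂ) c * d = 0 := by
    have := entry 0 1 _ _ hUU'
    simpa [Matrix.mul_apply, Fin.sum_univ_two, hUdef, Matrix.one_apply] using this
  have habcd0' : a * (starRingEnd ℂ) b + c * (starRingEnd ℂ) d = 0 := by
    have := congrArg (starRingEnd ℂ) habcd0
    simpa [map_add, _root_.map_mul, mul_comm] using this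
  -- normSq facts
  have nsq : ∀ z : ℂ, z * (starRingEnd ℂ) z = (Complex.normSq z : ℂ) := fun z => Complex.mul_conj z
  have hnab : Complex.normSq a + Complex.normSq b = 1 := by
    apply Complex.ofReal_inj.mp
    push_cast
    rw [← nsq, ← nsq]; exact hab
  have hnac : Complex.normSq a + Complex.normSq c = 1 := by
    apply Complex.ofReal_inj.mp
    push_cast
    rw [← nsq, ← nsq]
    rw [mul_comm ((starRingEnd ℂ) a) a, mul_comm ((starRingEnd ℂ) c) c] at hac
    exact hac
  have hncd : Complex.normSq c + Complex.normSq d = 1 := by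
    apply Complex.ofReal_inj.mp
    push_cast
    rw [← nsq, ← nsq]; exact hcd
  have hp0 : 0 < p := Complex.normSq_pos.mpr ha
  have hp1 : p < 1 := by
    have hb0 : 0 < Complex.normSq b := Complex.normSq_pos.mpr hb
    linarith [hnab]
  -- entry normSq values
  have e00 : Complex.normSq (U 0 0) = p := by rw [hUdef]; simp [hp]
  have e01 : Complex.normSq (U 0 1) = 1 - p := by
    rw [hUdef]; simp; linarith [hnab]
  have e10 : Complex.normSq (U 1 0) = 1 - p := by
    rw [hUdef]; simp; linarith [hnac]
  have e11 : Complex.normSq (U 1 1) = p := by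
    rw [hUdef]; simp
    have : Complex.normSq c = 1 - p := by linarith [hnac]
    linarith [hncd]
  -- base values
  have hφC : α * (starRingEnd ℂ) α + β * (starRingEnd ℂ) β = 1 := by
    have h1 : Complex.normSq α + Complex.normSq β = 1 := by
      rw [← Complex.sq_norm, ← Complex.sq_norm]; exact hφ
    rw [nsq, nsq]
    push_cast
    exact_mod_cast congrArg (fun x : ℝ => (x : ℂ)) h1
  have hmv0 : U.mulVec φ 0 = a * α + b * β := by
    simp [hUdef, hφdef, Matrix.mulVec, dotProduct, Fin.sum_univ_two]
  have hmv1 : U.mulVec φ 1 = c * α + d * β := by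
    simp [hUdef, hφdef, Matrix.mulVec, dotProduct, Fin.sum_univ_two]
  have hsum0 : tN U φ 0 0 + tN U φ 0 1 = 1 := by
    rw [tN_zero, tN_zero, hmv0, hmv1]
    apply Complex.ofReal_inj.mp
    push_cast
    rw [← nsq, ← nsq]
    simp only [map_add, _root_.map_mul]
    linear_combination (α * (starRingEnd ℂ) α) * hac + (β * (starRingEnd ℂ) β) * hbd
      + (α * (starRingEnd ℂ) β) * habcd0' + ((starRingEnd ℂ) α * β) * habcd0 + hφC
  -- sum invariance
  have hsum : ∀ n, tN U φ n 0 + tN U φ n 1 = 1 := by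
    intro n
    induction n with
    | zero => exact hsum0
    | succ n ih =>
      rw [tN_succ, tN_succ, Fin.sum_univ_two, Fin.sum_univ_two, e00, e01, e10, e11]
      nlinarith [ih]
  -- recursion for component 1
  have hrec : ∀ n, tN U φ (n+1) 1 = (2*p-1) * tN U φ n 1 + (1-p) := by
    intro n
    rw [tN_succ, Fin.sum_univ_two, e10, e11]
    have := hsum n
    nlinarith [this]
  -- closed form
  have hclosed : ∀ n, tN U φ n 1 = 1/2 + (2*p-1)^n * (tN U φ 0 1 - 1/2) := by
    intro n
    induction n with
    | zero => simp
    | succ n ih =>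
      rw [hrec n, ih]
      ring
  -- tendsto of tN _ 1 to 1/2
  have hlim : Filter.Tendsto (fun n => tN U φ n 1) Filter.atTop (nhds (1/2)) := by
    have habs : |2*p-1| < 1 := by
      rw [abs_lt]; constructor <;> linarith
    have hpow : Filter.Tendsto (fun n : ℕ => (2*p-1)^n) Filter.atTop (nhds 0) := by
      apply tendsto_pow_atTop_nhds_zero_of_norm_lt_one
      simpa [Real.norm_eq_abs] using habs
    have : Filter.Tendsto (fun n : ℕ => 1/2 + (2*p-1)^n * (tN U φ 0 1 - 1/2))
        Filter.atTop (nhds (1/2 + 0 * (tN U φ 0 1 - 1/2))) :=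
      Filter.Tendsto.const_add _ (hpow.mul_const _)
    rw [zero_mul, add_zero] at this
    convert this using 2
    exact hclosed _
  -- entropy function
  set g : ℝ → ℝ := fun x => -((1-x) * Real.logb 2 (1-x) + x * Real.logb 2 x) with hg
  have hE : ∀ n, vnEntropy (decMat U φ (A0 n)) = g (tN U φ n 1) := by
    intro n
    rw [vnEntropy_decMat, hg]
    have h0 : tN U φ n 0 = 1 - tN U φ n 1 := by linarith [hsum n]
    rw [h0]
  have hcont : ContinuousAt g (1/2) := by
    have hlogb : ∀ y : ℝ, y ≠ 0 → ContinuousAt (fun x : ℝ => Real.logb 2 x) y :=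
      fun y hy => Real.continuousAt_logb hy
    apply ContinuousAt.neg
    apply ContinuousAt.add
    · apply ContinuousAt.mul
      · exact (continuousAt_const.sub continuousAt_id)
      · exact ((hlogb (1 - 1/2) (by norm_num)).comp
          ((continuousAt_const.sub continuousAt_id)))
    · exact continuousAt_id.mul (hlogb (1/2) (by norm_num))
  have hg12 : g (1/2) = 1 := by
    rw [hg]
    have : Real.logb 2 (1/2 : ℝ) = -1 := by
      rw [show (1/2 : ℝ) = 2⁻¹ by norm_num, Real.logb_inv, Real.logb_self_eq_one] <;> norm_num
    norm_num [this]
  have : Filter.Tendsto (fun n => g (tN U φ n 1)) Filter.atTop (nhds 1) := by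
    rw [← hg12]
    exact (hcont.tendsto).comp hlim
  convert this using 1
  funext n
  exact hE n
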